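/- Let I ⊆ ℝ be a compact interval and let K be the nc convex set with Kₙ = {self-adjoint α ∈ Mₙ (or B(Hₙ)) with spectrum contained in I}. For a continuous real function f ∈ C(I), define f on K by the continuous functional calculus. Then the resulting nc function is convex in the nc sense (f(α* x α) ≤ α* f(x) α for all isometries α and x ∈ K, equivalently f(λx+(1−λ)y) ≤ λf(x)+(1−λ)f(y) at every level) if and only if f is operator convex on I. -/

import Mathlib

open Matrix Polynomial
open scoped ComplexOrder

noncomputable section

/-- The Loewner order on complex matrices: `A ≤ B` iff `B - A` is positive
semidefinite. -/
def loewnerLe {m : ℕ} (A B : Matrix (Fin m) (Fin m) ℂ) : Prop :=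
  (B - A).PosSemidef

namespace NCAux

lemma exists_interp (f : ℝ → ℝ) (S : Set ℝ) (hS : S.Finite) :
    ∃ p : ℝ[X], ∀ r ∈ S, p.eval r = f r := by
  refine ⟨Lagrange.interpolate hS.toFinset id f, fun r hr => ?_⟩
  simpa using Lagrange.eval_interpolate_at_node (v := id) f (Set.injOn_id _) (by simpa using hr)

lemma cfc_eq_aeval {n : ℕ} {A : Matrix (Fin n) (Fin n) ℂ} (hA : A.IsHermitian) {f : ℝ → ℝ}
    {p : ℝ[X]} (h : ∀ r ∈ spectrum ℝ A, p.eval r = f r) : cfc f A = aeval A p := by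
  rw [← cfc_polynomial p A hA.isSelfAdjoint]
  exact cfc_congr fun r hr => (h r hr).symm

lemma pow_intertwine {m l : ℕ} {x : Matrix (Fin m) (Fin m) ℂ} {α : Matrix (Fin m) (Fin l) ℂ}
    {b : Matrix (Fin l) (Fin l) ℂ} (hxb : x * α = α * b) (n : ℕ) :
    x ^ n * α = α * b ^ n := by
  induction n with
  | zero => simp
  | succ k ih =>
    rw [pow_succ, pow_succ, Matrix.mul_assoc, hxb, ← Matrix.mul_assoc, ih, Matrix.mul_assoc]

lemma aeval_intertwine {m l : ℕ} {x : Matrix (Fin m) (Fin m) ℂ} {α : Matrix (Fin m) (Fin l) ℂ}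
    {b : Matrix (Fin l) (Fin l) ℂ} (hxb : x * α = α * b) (p : ℝ[X]) :
    aeval x p * α = α * aeval b p := by
  induction p using Polynomial.induction_on' with
  | add p q hp hq => rw [map_add, map_add, Matrix.add_mul, Matrix.mul_add, hp, hq]
  | monomial n a =>
    rw [aeval_monomial, aeval_monomial, ← Algebra.smul_def, ← Algebra.smul_def,
      Matrix.smul_mul, Matrix.mul_smul, pow_intertwine hxb]

/-- Key compression lemma: `αᴴ f(x) α = f(b)` whenever `α` is an isometry
intertwining `x` and `b`. -/
lemma compress_cfc {m l : ℕ} (f : ℝ → ℝ) {x : Matrix (Fin m) (Fin m) ℂ} (hx : x.IsHermitian)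
    {α : Matrix (Fin m) (Fin l) ℂ} (hα : αᴴ * α = 1) {b : Matrix (Fin l) (Fin l) ℂ}
    (hb : b.IsHermitian) (hxb : x * α = α * b) :
    αᴴ * cfc f x * α = cfc f b := by
  obtain ⟨p, hp⟩ := exists_interp f (spectrum ℝ x ∪ spectrum ℝ b)
    (Matrix.finite_real_spectrum.union Matrix.finite_real_spectrum)
  rw [cfc_eq_aeval hx (fun r hr => hp r (Or.inl hr)),
    cfc_eq_aeval hb (fun r hr => hp r (Or.inr hr)),
    Matrix.mul_assoc, aeval_intertwine hxb, ← Matrix.mul_assoc, hα, Matrix.one_mul]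

lemma spectrum_conj {m : ℕ} {u : Matrix (Fin m) (Fin m) ℂ} (huu : u * u = 1)
    (x : Matrix (Fin m) (Fin m) ℂ) : spectrum ℝ (u * x * u) = spectrum ℝ x := by
  have key : ∀ r : ℝ, algebraMap ℝ (Matrix (Fin m) (Fin m) ℂ) r - u * x * u
      = u * (algebraMap ℝ (Matrix (Fin m) (Fin m) ℂ) r - x) * u := by
    intro r
    rw [Matrix.mul_sub, Matrix.sub_mul, Algebra.algebraMap_eq_smul_one]
    rw [Matrix.mul_smul, Matrix.mul_one, Matrix.smul_mul, huu]
  ext r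
  simp only [spectrum.mem_iff, not_iff_not, key r]
  rw [show u = ((⟨u, u, huu, huu⟩ : (Matrix (Fin m) (Fin m) ℂ)ˣ) : Matrix (Fin m) (Fin m) ℂ)
    from rfl, Units.isUnit_mul_units, Units.isUnit_units_mul]

lemma isUnit_submatrix {m : ℕ} {n' : Type*} [Fintype n'] [DecidableEq n'] (e : Fin m ≃ n')
    {M : Matrix n' n' ℂ} (h : IsUnit M) : IsUnit (M.submatrix ⇑e ⇑e) := by
  obtain ⟨v, hv1, hv2⟩ := isUnit_iff_exists.mp h
  refine isUnit_iff_exists.mpr ⟨v.submatrix ⇑e ⇑e, ?_, ?_⟩ <;>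
    rw [submatrix_mul_equiv] <;> simp [hv1, hv2, submatrix_one_equiv]

lemma spectrum_submatrix_subset {m : ℕ} {n' : Type*} [Fintype n'] [DecidableEq n']
    (e : Fin m ≃ n') (M : Matrix n' n' ℂ) :
    spectrum ℝ (M.submatrix ⇑e ⇑e) ⊆ spectrum ℝ M := by
  intro r hr
  rw [spectrum.mem_iff] at hr ⊢
  intro hu
  exact hr <| by
    have := isUnit_submatrix e hu
    have heq : ((algebraMap ℝ (Matrix n' n' ℂ)) r - M).submatrix ⇑e ⇑e
        = (algebraMap ℝ (Matrix (Fin m) (Fin m) ℂ)) r - M.submatrix ⇑e ⇑e := by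
      ext i j
      simp [Algebra.algebraMap_eq_smul_one, Matrix.one_apply, Equiv.apply_eq_iff_eq]
    rwa [heq] at this

variable {m : ℕ}

lemma algebraMap_sub_fromBlocks (r : ℝ) (x y : Matrix (Fin m) (Fin m) ℂ) :
    algebraMap ℝ (Matrix (Fin m ⊕ Fin m) (Fin m ⊕ Fin m) ℂ) r - fromBlocks x 0 0 y
      = fromBlocks (algebraMap ℝ (Matrix (Fin m) (Fin m) ℂ) r - x) 0 0
          (algebraMap ℝ (Matrix (Fin m) (Fin m) ℂ) r - y) := by
  ext (i | i) (j | j) <;>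
    simp [Algebra.algebraMap_eq_smul_one, Matrix.one_apply, fromBlocks]

lemma isUnit_fromBlocks {x y : Matrix (Fin m) (Fin m) ℂ} (hx : IsUnit x) (hy : IsUnit y) :
    IsUnit (fromBlocks x 0 0 y) := by
  obtain ⟨v, hv1, hv2⟩ := isUnit_iff_exists.mp hx
  obtain ⟨w, hw1, hw2⟩ := isUnit_iff_exists.mp hy
  refine isUnit_iff_exists.mpr ⟨fromBlocks v 0 0 w, ?_, ?_⟩ <;>
    simp [Matrix.fromBlocks_multiply, hv1, hv2, hw1, hw2, Matrix.fromBlocks_one]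

lemma spectrum_fromBlocks_subset (x y : Matrix (Fin m) (Fin m) ℂ) :
    spectrum ℝ (fromBlocks x 0 0 y) ⊆ spectrum ℝ x ∪ spectrum ℝ y := by
  intro r hr
  by_contra hmem
  rw [Set.mem_union, not_or, spectrum.notMem_iff, spectrum.notMem_iff] at hmem
  rw [spectrum.mem_iff, algebraMap_sub_fromBlocks] at hr
  exact hr (isUnit_fromBlocks hmem.1 hmem.2)

lemma fromBlocks_pow (x y : Matrix (Fin m) (Fin m) ℂ) (n : ℕ) :
    (fromBlocks x 0 0 y) ^ n = fromBlocks (x ^ n) 0 0 (y ^ n) := by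
  induction n with
  | zero => simp [Matrix.fromBlocks_one]
  | succ k ih => rw [pow_succ, pow_succ, pow_succ, ih]; simp [Matrix.fromBlocks_multiply]

lemma aeval_fromBlocks (x y : Matrix (Fin m) (Fin m) ℂ) (p : ℝ[X]) :
    aeval (fromBlocks x 0 0 y) p = fromBlocks (aeval x p) 0 0 (aeval y p) := by
  induction p using Polynomial.induction_on' with
  | add p q hp hq => rw [map_add, map_add, map_add, hp, hq]; simp [Matrix.fromBlocks_add]
  | monomial n a =>
    rw [aeval_monomial, aeval_monomial, aeval_monomial, ← Algebra.smul_def, ← Algebra.smul_def,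
      ← Algebra.smul_def, fromBlocks_pow]
    simp [Matrix.fromBlocks_smul]

lemma submatrix_pow {n' : Type*} [Fintype n'] [DecidableEq n'] (e : Fin m ≃ n')
    (M : Matrix n' n' ℂ) (n : ℕ) : (M.submatrix ⇑e ⇑e) ^ n = (M ^ n).submatrix ⇑e ⇑e := by
  induction n with
  | zero => simp [Matrix.submatrix_one_equiv]
  | succ k ih => rw [pow_succ, pow_succ, ih, submatrix_mul_equiv]

lemma aeval_submatrix {n' : Type*} [Fintype n'] [DecidableEq n'] (e : Fin m ≃ n')
    (M : Matrix n' n' ℂ) (p : ℝ[X]) :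
    aeval (M.submatrix ⇑e ⇑e) p = (aeval M p).submatrix ⇑e ⇑e := by
  induction p using Polynomial.induction_on' with
  | add p q hp hq => rw [map_add, map_add, hp, hq]; ext i j; simp
  | monomial n a =>
    rw [aeval_monomial, aeval_monomial, ← Algebra.smul_def, ← Algebra.smul_def, submatrix_pow]
    ext i j; simp

lemma fromBlocks_isHermitian {x y : Matrix (Fin m) (Fin m) ℂ} (hx : x.IsHermitian)
    (hy : y.IsHermitian) : (fromBlocks x 0 0 y).IsHermitian := by
  show _ᴴ = _
  rw [fromBlocks_conjTranspose]
  simp [hx.eq, hy.eq]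

lemma cfc_blockdiag (f : ℝ → ℝ) {x y : Matrix (Fin m) (Fin m) ℂ}
    (hx : x.IsHermitian) (hy : y.IsHermitian) {k : ℕ} (e : Fin k ≃ (Fin m ⊕ Fin m)) :
    cfc f ((fromBlocks x 0 0 y).submatrix ⇑e ⇑e)
      = (fromBlocks (cfc f x) 0 0 (cfc f y)).submatrix ⇑e ⇑e := by
  have hz : ((fromBlocks x 0 0 y).submatrix ⇑e ⇑e).IsHermitian :=
    (fromBlocks_isHermitian hx hy).submatrix _
  obtain ⟨p, hp⟩ := exists_interp f
    (spectrum ℝ x ∪ spectrum ℝ y ∪ spectrum ℝ ((fromBlocks x 0 0 y).submatrix ⇑e ⇑e))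
    ((Matrix.finite_real_spectrum.union Matrix.finite_real_spectrum).union
      Matrix.finite_real_spectrum)
  rw [cfc_eq_aeval hz (fun r hr => hp r (Or.inr hr)), aeval_submatrix, aeval_fromBlocks,
    ← cfc_eq_aeval hx (fun r hr => hp r (Or.inl (Or.inl hr))),
    ← cfc_eq_aeval hy (fun r hr => hp r (Or.inl (Or.inr hr)))]

lemma ofReal_smul_matrix (r : ℝ) {k l : ℕ} (C : Matrix (Fin k) (Fin l) ℂ) :
    (r : ℂ) • C = r • C := by
  ext i j
  simp [Complex.real_smul]

section Compression

variable {k : ℕ} (e : Fin k ≃ (Fin m ⊕ Fin m)) (t : ℝ)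

/-- The column isometry `[√t ; √(1-t)]` (reindexed). -/
def colIso : Matrix (Fin k) (Fin m) ℂ :=
  (fromRows ((Real.sqrt t : ℂ) • (1 : Matrix (Fin m) (Fin m) ℂ))
    ((Real.sqrt (1 - t) : ℂ) • (1 : Matrix (Fin m) (Fin m) ℂ))).submatrix ⇑e id

lemma conjTranspose_V :
    (fromRows ((Real.sqrt t : ℂ) • (1 : Matrix (Fin m) (Fin m) ℂ))
      ((Real.sqrt (1 - t) : ℂ) • (1 : Matrix (Fin m) (Fin m) ℂ)))ᴴ
    = fromCols ((Real.sqrt t : ℂ) • (1 : Matrix (Fin m) (Fin m) ℂ))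
      ((Real.sqrt (1 - t) : ℂ) • (1 : Matrix (Fin m) (Fin m) ℂ)) := by
  rw [conjTranspose_fromRows_eq_fromCols_conjTranspose]
  congr 1 <;> simp [Matrix.conjTranspose_smul, Complex.star_def, Complex.conj_ofReal]

lemma compress_blockdiag (ht0 : 0 ≤ t) (ht1 : t ≤ 1) (A B : Matrix (Fin m) (Fin m) ℂ) :
    (colIso e t)ᴴ * ((fromBlocks A 0 0 B).submatrix ⇑e ⇑e) * (colIso e t)
      = t • A + (1 - t) • B := by
  set st : ℂ := (Real.sqrt t : ℂ) with hst
  set su : ℂ := (Real.sqrt (1 - t) : ℂ) with hsu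
  have hstst : st * st = (t : ℂ) := by
    rw [hst, ← Complex.ofReal_mul, Real.mul_self_sqrt ht0]
  have hsusu : su * su = ((1 - t : ℝ) : ℂ) := by
    rw [hsu, ← Complex.ofReal_mul, Real.mul_self_sqrt (by linarith)]
  rw [colIso, conjTranspose_submatrix, conjTranspose_V, submatrix_mul_equiv,
    submatrix_mul_equiv, submatrix_id_id, Matrix.mul_assoc,
    fromBlocks_mul_fromRows, fromCols_mul_fromRows]
  simp only [Matrix.smul_mul, Matrix.mul_smul, Matrix.zero_mul, Matrix.mul_zero,
    Matrix.mul_one, Matrix.one_mul, smul_zero, add_zero, zero_add, smul_smul]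
  rw [hstst, hsusu, ofReal_smul_matrix, ofReal_smul_matrix]

lemma colIso_isometry (ht0 : 0 ≤ t) (ht1 : t ≤ 1) :
    (colIso e t)ᴴ * (colIso e t) = (1 : Matrix (Fin m) (Fin m) ℂ) := by
  set st : ℂ := (Real.sqrt t : ℂ) with hst
  set su : ℂ := (Real.sqrt (1 - t) : ℂ) with hsu
  have hstst : st * st = (t : ℂ) := by
    rw [hst, ← Complex.ofReal_mul, Real.mul_self_sqrt ht0]
  have hsusu : su * su = ((1 - t : ℝ) : ℂ) := by
    rw [hsu, ← Complex.ofReal_mul, Real.mul_self_sqrt (by linarith)]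
  rw [colIso, conjTranspose_submatrix, conjTranspose_V, submatrix_mul_equiv,
    submatrix_id_id, fromCols_mul_fromRows]
  simp only [Matrix.smul_mul, Matrix.mul_smul, Matrix.mul_one, smul_smul]
  rw [hstst, hsusu, ← add_smul]
  norm_num

end Compression

lemma loewnerLe_compress {l : ℕ} {A B : Matrix (Fin m) (Fin m) ℂ} (h : loewnerLe A B)
    (α : Matrix (Fin m) (Fin l) ℂ) : loewnerLe (αᴴ * A * α) (αᴴ * B * α) := by
  have := h.conjTranspose_mul_mul_same α
  unfold loewnerLe at *
  have heq : αᴴ * (B - A) * α = αᴴ * B * α - αᴴ * A * α := by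
    rw [Matrix.mul_sub, Matrix.sub_mul]
  rwa [heq] at this

end NCAux

open NCAux

/-- Let `I = [c,d] ⊆ ℝ` be a compact interval and let `K` be
the nc convex set whose level `m` consists of the self-adjoint `m × m` matrices
with spectrum in `I`.  For a continuous real function `f` on `I`, applied to such
matrices by the continuous functional calculus, the resulting nc function is
convex in the nc sense — `f(α* x α) ≤ α* f(x) α` for all isometries `α`,
equivalently `f(λx + (1−λ)y) ≤ λ f(x) + (1−λ) f(y)` at every level — if and only
if `f` is operator convex on `I` (which is precisely the levelwise condition). -/
theorem nc_convex_iff_operator_convex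
    (c d : ℝ) (hcd : c ≤ d) (f : ℝ → ℝ)
    (hf : ContinuousOn f (Set.Icc c d)) :
    ((∀ (m l : ℕ) (x : Matrix (Fin m) (Fin m) ℂ), x.IsHermitian →
        spectrum ℝ x ⊆ Set.Icc c d →
        ∀ α : Matrix (Fin m) (Fin l) ℂ, αᴴ * α = 1 →
          loewnerLe (cfc f (αᴴ * x * α)) (αᴴ * cfc f x * α)) ↔
      (∀ (m : ℕ) (x y : Matrix (Fin m) (Fin m) ℂ), x.IsHermitian → y.IsHermitian →
        spectrum ℝ x ⊆ Set.Icc c d → spectrum ℝ y ⊆ Set.Icc c d →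
        ∀ t : ℝ, 0 ≤ t → t ≤ 1 →
          loewnerLe (cfc f (t • x + (1 - t) • y))
            (t • cfc f x + (1 - t) • cfc f y))) := by
  constructor
  · -- isometry form implies levelwise convexity
    intro hcfc m x y hx hy hsx hsy t ht0 ht1
    set e : Fin (m + m) ≃ (Fin m ⊕ Fin m) := finSumFinEquiv.symm with he
    set M : Matrix (Fin m ⊕ Fin m) (Fin m ⊕ Fin m) ℂ := fromBlocks x 0 0 y with hM
    set z : Matrix (Fin (m + m)) (Fin (m + m)) ℂ := M.submatrix ⇑e ⇑e with hz
    have hz_herm : z.IsHermitian := (fromBlocks_isHermitian hx hy).submatrix _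
    have hz_spec : spectrum ℝ z ⊆ Set.Icc c d :=
      (spectrum_submatrix_subset e M).trans
        ((spectrum_fromBlocks_subset x y).trans (Set.union_subset hsx hsy))
    have key := hcfc (m + m) m z hz_herm hz_spec (colIso e t) (colIso_isometry e t ht0 ht1)
    rw [show (colIso e t)ᴴ * z * colIso e t = t • x + (1 - t) • y from
      compress_blockdiag e t ht0 ht1 x y] at key
    rw [hz, cfc_blockdiag f hx hy e,
      compress_blockdiag e t ht0 ht1 (cfc f x) (cfc f y)] at key
    exact key
  · -- levelwise convexity implies the isometry form
    intro hlev m l x hx hsx α hα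
    set P : Matrix (Fin m) (Fin m) ℂ := α * αᴴ with hP
    have hPP : P * P = P := by
      rw [hP, Matrix.mul_assoc, ← Matrix.mul_assoc αᴴ, hα, Matrix.one_mul]
    set u : Matrix (Fin m) (Fin m) ℂ := 1 - (2 : ℝ) • P with hu
    have hu_herm : uᴴ = u := by
      rw [hu]
      simp [Matrix.conjTranspose_smul, hP, Matrix.conjTranspose_mul, Matrix.mul_assoc]
    have huu : u * u = 1 := by
      rw [hu]
      simp only [Matrix.sub_mul, Matrix.mul_sub, Matrix.one_mul, Matrix.mul_one,
        Matrix.smul_mul, Matrix.mul_smul, smul_smul, hPP]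
      module
    have hPα : P * α = α := by
      rw [hP, Matrix.mul_assoc, hα, Matrix.mul_one]
    have huα : u * α = -α := by
      rw [hu, Matrix.sub_mul, Matrix.one_mul, Matrix.smul_mul, hPα, two_smul]
      abel
    have hxu_herm : (u * x * u).IsHermitian := by
      show _ᴴ = _
      rw [Matrix.conjTranspose_mul, Matrix.conjTranspose_mul, hu_herm, hx.eq, Matrix.mul_assoc]
    have hs_uxu : spectrum ℝ (u * x * u) ⊆ Set.Icc c d := by
      rw [spectrum_conj huu x]; exact hsx
    set b : Matrix (Fin l) (Fin l) ℂ := αᴴ * x * α with hb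
    have hb_herm : b.IsHermitian := isHermitian_conjTranspose_mul_mul α hx
    -- the pinched matrix
    set y : Matrix (Fin m) (Fin m) ℂ := (1/2 : ℝ) • x + (1 - (1/2 : ℝ)) • (u * x * u) with hy
    have hy_herm : y.IsHermitian := by
      show _ᴴ = _
      rw [hy, Matrix.conjTranspose_add, Matrix.conjTranspose_smul, Matrix.conjTranspose_smul,
        hx.eq, hxu_herm.eq, star_trivial, star_trivial]
    have hint : y * α = α * b := by
      have hPxα : P * (x * α) = α * b := by
        rw [hP, Matrix.mul_assoc α αᴴ (x * α), hb, Matrix.mul_assoc αᴴ x α]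
      have huxuα : u * x * u * α = -(x * α) + (2 : ℝ) • (α * b) := by
        rw [Matrix.mul_assoc (u * x) u α, huα, Matrix.mul_neg, Matrix.mul_assoc u x α, hu,
          Matrix.sub_mul, Matrix.one_mul, Matrix.smul_mul, hPxα]
        module
      rw [hy, Matrix.add_mul, Matrix.smul_mul, Matrix.smul_mul, huxuα]
      module
    have hcomp := compress_cfc f hy_herm hα hb_herm hint
    have hconj : cfc f (u * x * u) = u * cfc f x * u := by
      have h2 : uᴴ * u = 1 := by rw [hu_herm]; exact huu
      have hint2 : (u * x * u) * u = u * x := by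
        rw [Matrix.mul_assoc, huu, Matrix.mul_one]
      have := compress_cfc f hxu_herm h2 hx hint2
      rw [hu_herm] at this
      calc cfc f (u * x * u) = (u * u) * cfc f (u * x * u) * (u * u) := by
            rw [huu, Matrix.one_mul, Matrix.mul_one]
        _ = u * (u * cfc f (u * x * u) * u) * u := by
            simp only [Matrix.mul_assoc]
        _ = u * cfc f x * u := by rw [this]
    have hkey := hlev m x (u * x * u) hx hxu_herm hsx hs_uxu (1/2 : ℝ) (by norm_num)
      (by norm_num)
    have hkey2 := loewnerLe_compress hkey α
    rw [← hy] at hkey2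
    rw [hcomp] at hkey2
    have hRHS : αᴴ * ((1/2 : ℝ) • cfc f x + (1 - (1/2 : ℝ)) • cfc f (u * x * u)) * α
        = αᴴ * cfc f x * α := by
      have hαu : αᴴ * u = -αᴴ := by
        have := congrArg conjTranspose huα
        rwa [Matrix.conjTranspose_mul, hu_herm, Matrix.conjTranspose_neg] at this
      have hmid : αᴴ * (u * cfc f x * u) * α = αᴴ * cfc f x * α := by
        have h1 : αᴴ * (u * cfc f x * u) * α = (αᴴ * u) * (cfc f x * (u * α)) := by
          simp only [Matrix.mul_assoc]
        rw [h1, hαu, huα, Matrix.mul_neg, Matrix.neg_mul, Matrix.mul_neg, neg_neg,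
          ← Matrix.mul_assoc]
      rw [hconj, Matrix.mul_add, Matrix.add_mul, Matrix.mul_smul, Matrix.mul_smul,
        Matrix.smul_mul, Matrix.smul_mul, hmid]
      module
    rw [hRHS] at hkey2
    exact hkey2

end
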